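/- Let G be a finite bipartite simple graph with parts L and R (every edge joins a vertex of L to a vertex of R) whose girth equals 8, in which every vertex of L has degree 3, and suppose that any two cycles of length 8 in G with distinct edge sets have no common vertex belonging to L. Let S ⊆ L with |S| = a be nonempty and such that every vertex of R has at most 2 neighbors in S, let b be the number of vertices of R having an odd number of neighbors in S, and suppose b < a. Then: if b = 0 then a ≥ 10; if b = 1 then a ≥ 11; if b = 2 then a ≥ 10; and if b = 3 then a ≥ 7. -/

import Mathlib

open SimpleGraph Finset


lemma cycle_len_ge {V : Type*} {G : SimpleGraph V} (hg : G.girth = 8) {v : V} (w : G.Walk v v)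
    (hw : w.IsCycle) : 8 ≤ w.length := by
  have h1 : G.egirth ≤ w.length := le_egirth.mp le_rfl _ _ hw
  have h2 : G.egirth ≠ ⊤ := by
    intro hA
    exact (egirth_eq_top.mp hA) w hw
  have h3 : G.egirth = (8 : ℕ∞) := by
    rw [← ENat.coe_toNat h2]
    exact_mod_cast congrArg (Nat.cast : ℕ → ℕ∞) hg
  rw [h3] at h1
  exact_mod_cast h1

/-- no 4-cycles: two distinct checks cannot link the same pair. -/
lemma no4 {V : Type*} {G : SimpleGraph V} (hg : G.girth = 8) {v w r r' : V}
    (hvw : v ≠ w) (hrr : r ≠ r') (a1 : G.Adj v r) (a2 : G.Adj r w) (a3 : G.Adj w r')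
    (a4 : G.Adj r' v) : False := by
  have e1 := a1.ne; have e2 := a2.ne; have e3 := a3.ne; have e4 := a4.ne
  have hc : (Walk.cons a1 (Walk.cons a2 (Walk.cons a3 (Walk.cons a4 Walk.nil)))).IsCycle := by
    rw [Walk.isCycle_def, Walk.isTrail_def]
    refine ⟨?_, by simp, ?_⟩
    · simp only [Walk.edges_cons, Walk.edges_nil, List.nodup_cons, List.mem_cons,
        List.not_mem_nil, or_false, List.nodup_nil, and_true, Sym2.eq_iff, not_or]
      refine ⟨⟨?_,?_,?_⟩,⟨?_,?_⟩,?_,not_false⟩ <;> tauto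
    · simp only [Walk.support_cons, Walk.support_nil, List.tail_cons, List.nodup_cons,
        List.mem_cons, List.not_mem_nil, or_false, List.nodup_nil, and_true]
      push_neg
      exact ⟨⟨e2, hrr, e1.symm⟩, ⟨e3, hvw.symm⟩, e4, trivial⟩
  have := cycle_len_ge hg _ hc
  simp at this

/-- no 6-cycles. -/
lemma no6 {V : Type*} {G : SimpleGraph V} (hg : G.girth = 8) {x y z r1 r2 r3 : V}
    (hxy : x ≠ y) (hxz : x ≠ z) (hyz : y ≠ z)
    (h12 : r1 ≠ r2) (h13 : r1 ≠ r3) (h23 : r2 ≠ r3)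
    (hzr1 : z ≠ r1) (hxr2 : x ≠ r2) (hyr3 : y ≠ r3)
    (a1 : G.Adj x r1) (a2 : G.Adj r1 y) (a3 : G.Adj y r2) (a4 : G.Adj r2 z)
    (a5 : G.Adj z r3) (a6 : G.Adj r3 x) : False := by
  have e1 := a1.ne; have e2 := a2.ne; have e3 := a3.ne; have e4 := a4.ne
  have e5 := a5.ne; have e6 := a6.ne
  have hc : (Walk.cons a1 (Walk.cons a2 (Walk.cons a3 (Walk.cons a4 (Walk.cons a5
      (Walk.cons a6 Walk.nil)))))).IsCycle := by
    rw [Walk.isCycle_def, Walk.isTrail_def]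
    refine ⟨?_, by simp, ?_⟩
    · simp only [Walk.edges_cons, Walk.edges_nil, List.nodup_cons, List.mem_cons,
        List.not_mem_nil, or_false, List.nodup_nil, and_true, Sym2.eq_iff, not_or]
      refine ⟨⟨?_,?_,?_,?_,?_⟩,⟨?_,?_,?_,?_⟩,⟨?_,?_,?_⟩,⟨?_,?_⟩,?_,not_false⟩ <;> tauto
    · simp only [Walk.support_cons, Walk.support_nil, List.tail_cons, List.nodup_cons,
        List.mem_cons, List.not_mem_nil, or_false, List.nodup_nil, and_true]
      push_neg
      exact ⟨⟨e2, h12, hzr1.symm, h13, e1.symm⟩, ⟨e3, hyz, hyr3, hxy.symm⟩,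
        ⟨e4, h23, hxr2.symm⟩, ⟨e5, hxz.symm⟩, e6, trivial⟩
  have := cycle_len_ge hg _ hc
  simp at this

set_option maxHeartbeats 1000000 in
/-- explicit 8-cycle. -/
lemma cyc8 {V : Type*} (G : SimpleGraph V) {v r1 x r2 w r3 y r4 : V}
    (a1 : G.Adj v r1) (a2 : G.Adj r1 x) (a3 : G.Adj x r2) (a4 : G.Adj r2 w)
    (a5 : G.Adj w r3) (a6 : G.Adj r3 y) (a7 : G.Adj y r4) (a8 : G.Adj r4 v)
    (hvx : v ≠ x) (hvw : v ≠ w) (hvy : v ≠ y) (hxw : x ≠ w) (hxy : x ≠ y) (hwy : w ≠ y)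
    (h12 : r1 ≠ r2) (h13 : r1 ≠ r3) (h14 : r1 ≠ r4) (h23 : r2 ≠ r3) (h24 : r2 ≠ r4)
    (h34 : r3 ≠ r4)
    (hvr2 : v ≠ r2) (hvr3 : v ≠ r3) (hxr3 : x ≠ r3) (hxr4 : x ≠ r4)
    (hwr1 : w ≠ r1) (hwr4 : w ≠ r4) (hyr1 : y ≠ r1) (hyr2 : y ≠ r2) :
    ∃ c : G.Walk v v, c.IsCycle ∧ c.length = 8 ∧
      c.edges = [s(v,r1), s(r1,x), s(x,r2), s(r2,w), s(w,r3), s(r3,y), s(y,r4), s(r4,v)] ∧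
      c.support = [v, r1, x, r2, w, r3, y, r4, v] := by
  refine ⟨Walk.cons a1 (Walk.cons a2 (Walk.cons a3 (Walk.cons a4 (Walk.cons a5 (Walk.cons a6
    (Walk.cons a7 (Walk.cons a8 Walk.nil))))))), ?_, by simp, by simp, by simp⟩
  have e1 := a1.ne; have e2 := a2.ne; have e3 := a3.ne; have e4 := a4.ne
  have e5 := a5.ne; have e6 := a6.ne; have e7 := a7.ne; have e8 := a8.ne
  rw [Walk.isCycle_def, Walk.isTrail_def]
  refine ⟨?_, by simp, ?_⟩
  · simp only [Walk.edges_cons, Walk.edges_nil, List.nodup_cons, List.mem_cons,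
      List.not_mem_nil, or_false, List.nodup_nil, and_true, Sym2.eq_iff, not_or]
    refine ⟨⟨?_,?_,?_,?_,?_,?_,?_⟩,⟨?_,?_,?_,?_,?_,?_⟩,⟨?_,?_,?_,?_,?_⟩,⟨?_,?_,?_,?_⟩,
      ⟨?_,?_,?_⟩,⟨?_,?_⟩,?_,not_false⟩ <;> tauto
  · simp only [Walk.support_cons, Walk.support_nil, List.tail_cons, List.nodup_cons,
      List.mem_cons, List.not_mem_nil, or_false, List.nodup_nil, and_true]
    push_neg
    exact ⟨⟨e2, h12, hwr1.symm, h13, hyr1.symm, h14, e1.symm⟩,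
      ⟨e3, hxw, hxr3, hxy, hxr4, hvx.symm⟩,
      ⟨e4, h23, hyr2.symm, h24, hvr2.symm⟩,
      ⟨e5, hwy, hwr4, hvw.symm⟩,
      ⟨e6, h34, hvr3.symm⟩,
      ⟨e7, hvy.symm⟩, e8, trivial⟩


lemma card_union3 {V : Type*} [DecidableEq V] (A B C : Finset V) :
    A.card + B.card + C.card ≤ (A ∪ B ∪ C).card +
      ((A ∩ B).card + (A ∩ C).card + (B ∩ C).card) := by
  have h1 := Finset.card_union_add_card_inter A B
  have h2 := Finset.card_union_add_card_inter (A ∪ B) C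
  have h3 : ((A ∪ B) ∩ C) ⊆ (A ∩ C) ∪ (B ∩ C) := by
    intro x hx
    simp only [Finset.mem_inter, Finset.mem_union] at hx ⊢
    tauto
  have h4 := Finset.card_le_card h3
  have h5 := Finset.card_union_le (A ∩ C) (B ∩ C)
  omega

lemma ball_lemma {V : Type*} [Fintype V] [DecidableEq V] (H : SimpleGraph V)
    [DecidableRel H.Adj] (S : Finset V)
    (hsupp : ∀ v w, H.Adj v w → v ∈ S ∧ w ∈ S)
    (htri : ∀ x y z, H.Adj x y → H.Adj y z → H.Adj x z → False)
    (hC4 : ∀ v x y z t w w', H.Adj v x → H.Adj v y → H.Adj x w → H.Adj y w →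
      H.Adj v z → H.Adj v t → H.Adj z w' → H.Adj t w' →
      x ≠ y → z ≠ t → w ≠ v → w' ≠ v →
      w = w' ∧ ((x = z ∧ y = t) ∨ (x = t ∧ y = z)))
    {v : V} (hv : H.degree v = 3) :
    (∑ n ∈ H.neighborFinset v, H.degree n ≤ S.card) ∧
    (∀ u ∈ S, S.card ≤ ∑ n ∈ H.neighborFinset v, H.degree n →
      u = v ∨ H.Adj v u ∨ ∃ n, H.Adj v n ∧ H.Adj n u) := by
  classical
  set N := H.neighborFinset v with hNdef
  have hNcard : N.card = 3 := hv
  obtain ⟨n1, n2, n3, h12, h13, h23, hNe⟩ := Finset.card_eq_three.mp hNcard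
  set A : V → Finset V := fun n => (H.neighborFinset n).erase v with hAdef
  have hmemN : ∀ n, n ∈ N → H.Adj v n := fun n hn => by
    rw [hNdef, mem_neighborFinset] at hn; exact hn
  have hA : ∀ n w, w ∈ A n → H.Adj n w ∧ w ≠ v := by
    intro n w hw
    simp only [hAdef, Finset.mem_erase, mem_neighborFinset] at hw
    exact ⟨hw.2, hw.1⟩
  have key : ∀ x y z t w w', x ∈ N → y ∈ N → z ∈ N → t ∈ N → x ≠ y → z ≠ t →
      w ∈ A x ∩ A y → w' ∈ A z ∩ A t →
      w = w' ∧ ((x = z ∧ y = t) ∨ (x = t ∧ y = z)) := by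
    intro x y z t w w' hx hy hz ht hxy hzt hw hw'
    rw [Finset.mem_inter] at hw hw'
    exact hC4 v x y z t w w' (hmemN x hx) (hmemN y hy) (hA x w hw.1).1 (hA y w hw.2).1
      (hmemN z hz) (hmemN t ht) (hA z w' hw'.1).1 (hA t w' hw'.2).1 hxy hzt
      (hA x w hw.1).2 (hA z w' hw'.1).2
  -- each pairwise intersection has at most 1 element
  have hsmall : ∀ x y, x ∈ N → y ∈ N → x ≠ y → (A x ∩ A y).card ≤ 1 := by
    intro x y hx hy hxy
    refine Finset.card_le_one.mpr (fun w hw w' hw' => ?_)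
    exact (key x y x y w w' hx hy hx hy hxy hxy hw hw').1
  -- cross intersections: at most one pair is nonempty
  have hcross : ∀ x y z t, x ∈ N → y ∈ N → z ∈ N → t ∈ N → x ≠ y → z ≠ t →
      ¬(x = z ∧ y = t) → ¬(x = t ∧ y = z) → (A x ∩ A y).Nonempty → (A z ∩ A t) = ∅ := by
    intro x y z t hx hy hz ht hxy hzt hne1 hne2 hW
    obtain ⟨w, hw⟩ := hW
    rw [Finset.eq_empty_iff_forall_notMem]
    intro w' hw'
    rcases (key x y z t w w' hx hy hz ht hxy hzt hw hw').2 with h | h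
    · exact hne1 h
    · exact hne2 h
  have hn1 : n1 ∈ N := by rw [hNe]; simp
  have hn2 : n2 ∈ N := by rw [hNe]; simp
  have hn3 : n3 ∈ N := by rw [hNe]; simp
  have hover : (A n1 ∩ A n2).card + (A n1 ∩ A n3).card + (A n2 ∩ A n3).card ≤ 1 := by
    by_cases h1 : (A n1 ∩ A n2).Nonempty
    · have e2 := hcross n1 n2 n1 n3 hn1 hn2 hn1 hn3 h12 h13 (fun h => h23 h.2)
        (fun h => h13 h.1) h1
      have e3 := hcross n1 n2 n2 n3 hn1 hn2 hn2 hn3 h12 h23 (fun h => h12 h.1)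
        (fun h => h13 h.1) h1
      have := hsmall n1 n2 hn1 hn2 h12
      rw [e2, e3]
      simpa using this
    · rw [Finset.not_nonempty_iff_eq_empty] at h1
      rw [h1]
      by_cases h2 : (A n1 ∩ A n3).Nonempty
      · have e3 := hcross n1 n3 n2 n3 hn1 hn3 hn2 hn3 h13 h23 (fun h => h12 h.1)
          (fun h => h13 h.1) h2
        have := hsmall n1 n3 hn1 hn3 h13
        rw [e3]
        simpa using this
      · rw [Finset.not_nonempty_iff_eq_empty] at h2
        rw [h2]
        have := hsmall n2 n3 hn2 hn3 h23
        simpa using this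
  -- the ball
  set U : Finset V := A n1 ∪ A n2 ∪ A n3 with hUdef
  set T : Finset V := insert v (N ∪ U) with hTdef
  have hvS : v ∈ S := (hsupp v n1 (hmemN n1 hn1)).1
  have hTS : T ⊆ S := by
    intro w hw
    rw [hTdef, Finset.mem_insert] at hw
    rcases hw with rfl | hw
    · exact hvS
    rw [Finset.mem_union] at hw
    rcases hw with hw | hw
    · exact (hsupp v w (hmemN w hw)).2
    · rw [hUdef] at hw
      simp only [Finset.mem_union] at hw
      rcases hw with (hw | hw) | hw
      · exact (hsupp n1 w (hA n1 w hw).1).2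
      · exact (hsupp n2 w (hA n2 w hw).1).2
      · exact (hsupp n3 w (hA n3 w hw).1).2
  have hvnotN : v ∉ N := by
    intro h
    exact H.irrefl (hmemN v h)
  have hvnotU : v ∉ U := by
    rw [hUdef]
    simp [hAdef]
  have hNU : Disjoint N U := by
    rw [Finset.disjoint_left]
    intro m hmN hmU
    rw [hUdef] at hmU
    simp only [Finset.mem_union] at hmU
    have : ∃ n, n ∈ N ∧ m ∈ A n := by
      rcases hmU with (h | h) | h
      exacts [⟨n1, hn1, h⟩, ⟨n2, hn2, h⟩, ⟨n3, hn3, h⟩]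
    obtain ⟨n, hnN, hmA⟩ := this
    have h1 := hmemN n hnN
    have h2 := (hA n m hmA).1
    have h3 := hmemN m hmN
    exact htri v n m h1 h2 h3
  have hTcard : T.card = 1 + (3 + U.card) := by
    rw [hTdef, Finset.card_insert_of_notMem (by
      rw [Finset.mem_union]; push_neg; exact ⟨hvnotN, hvnotU⟩),
      Finset.card_union_of_disjoint hNU, hNcard]
    omega
  have hAcard : ∀ n, n ∈ N → (A n).card + 1 = H.degree n := by
    intro n hn
    have hv_mem : v ∈ H.neighborFinset n := by
      rw [mem_neighborFinset]
      exact (hmemN n hn).symm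
    rw [hAdef]
    simp only
    rw [Finset.card_erase_of_mem hv_mem]
    have : 1 ≤ (H.neighborFinset n).card := Finset.card_pos.mpr ⟨v, hv_mem⟩
    unfold SimpleGraph.degree
    omega
  have hUcard : (A n1).card + (A n2).card + (A n3).card ≤ U.card + 1 := by
    have := card_union3 (A n1) (A n2) (A n3)
    rw [← hUdef] at this
    omega
  have hsum : ∑ n ∈ N, H.degree n = H.degree n1 + H.degree n2 + H.degree n3 := by
    rw [hNe]
    rw [Finset.sum_insert (by simp [h12, h13]), Finset.sum_insert (by simp [h23]),
      Finset.sum_singleton]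
    ring
  have hmain : ∑ n ∈ N, H.degree n ≤ T.card := by
    rw [hsum, hTcard]
    have a1 := hAcard n1 hn1
    have a2 := hAcard n2 hn2
    have a3 := hAcard n3 hn3
    omega
  constructor
  · exact le_trans hmain (Finset.card_le_card hTS)
  · intro u huS hle
    have hTeq : T = S := Finset.eq_of_subset_of_card_le hTS (le_trans hle hmain)
    have huT : u ∈ T := hTeq ▸ huS
    rw [hTdef, Finset.mem_insert] at huT
    rcases huT with rfl | huT
    · exact Or.inl rfl
    rw [Finset.mem_union] at huT
    rcases huT with huT | huT
    · exact Or.inr (Or.inl (hmemN u huT))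
    · rw [hUdef] at huT
      simp only [Finset.mem_union] at huT
      refine Or.inr (Or.inr ?_)
      rcases huT with (h | h) | h
      exacts [⟨n1, hmemN n1 hn1, (hA n1 u h).1⟩, ⟨n2, hmemN n2 hn2, (hA n2 u h).1⟩,
        ⟨n3, hmemN n3 hn3, (hA n3 u h).1⟩]

theorem abstractETS {V : Type*} [Fintype V] [DecidableEq V] (H : SimpleGraph V)
    [DecidableRel H.Adj] (S : Finset V)
    (hsupp : ∀ v w, H.Adj v w → v ∈ S ∧ w ∈ S)
    (htri : ∀ x y z, H.Adj x y → H.Adj y z → H.Adj x z → False)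
    (hC4 : ∀ v x y z t w w', H.Adj v x → H.Adj v y → H.Adj x w → H.Adj y w →
      H.Adj v z → H.Adj v t → H.Adj z w' → H.Adj t w' →
      x ≠ y → z ≠ t → w ≠ v → w' ≠ v →
      w = w' ∧ ((x = z ∧ y = t) ∨ (x = t ∧ y = z)))
    (hdeg3 : ∀ v ∈ S, H.degree v ≤ 3)
    (a b : ℕ) (ha : S.card = a)
    (hb : b = ∑ v ∈ S, (3 - H.degree v)) (hba : b < a) :
    (b = 0 → 10 ≤ a) ∧ (b = 1 → 11 ≤ a) ∧ (b = 2 → 10 ≤ a) ∧ (b = 3 → 7 ≤ a) := by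
  classical
  -- sum of degrees
  have h3a : ∑ v ∈ S, H.degree v + b = 3 * a := by
    have h1 : ∀ v ∈ S, H.degree v + (3 - H.degree v) = 3 := by
      intro v hv
      have := hdeg3 v hv
      omega
    have h2 : ∑ v ∈ S, (H.degree v + (3 - H.degree v)) = ∑ v ∈ S, 3 :=
      Finset.sum_congr rfl h1
    rw [Finset.sum_add_distrib, Finset.sum_const, smul_eq_mul, ha] at h2
    omega
  -- handshake parity
  have heven : (∑ v ∈ S, H.degree v) % 2 = 0 := by
    have hzero : ∀ v ∈ (Finset.univ : Finset V), v ∉ S → H.degree v = 0 := by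
      intro v _ hv
      rw [← card_neighborFinset_eq_degree, Finset.card_eq_zero, Finset.eq_empty_iff_forall_notMem]
      intro w hw
      rw [mem_neighborFinset] at hw
      exact hv (hsupp v w hw).1
    have hsub : ∑ v ∈ S, H.degree v = ∑ v ∈ Finset.univ, H.degree v :=
      Finset.sum_subset (Finset.subset_univ S) hzero
    rw [hsub, SimpleGraph.sum_degrees_eq_twice_card_edges]
    omega
  -- a degree-3 vertex exists
  have hv3 : ∃ v ∈ S, H.degree v = 3 := by
    by_contra h
    push_neg at h
    have hle : ∑ v ∈ S, H.degree v ≤ ∑ v ∈ S, 2 := by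
      refine Finset.sum_le_sum (fun v hv => ?_)
      have h1 := hdeg3 v hv
      have h2 := h v hv
      omega
    rw [Finset.sum_const, smul_eq_mul, ha] at hle
    omega
  have hGB : 9 ≤ a + b := by
    obtain ⟨v, hvS, hv3'⟩ := hv3
    have hball := (ball_lemma H S hsupp htri hC4 hv3').1
    rw [ha] at hball
    have hsub : H.neighborFinset v ⊆ S.erase v := by
      intro n hn
      rw [mem_neighborFinset] at hn
      rw [Finset.mem_erase]
      exact ⟨hn.ne', (hsupp v n hn).2⟩
    have hNcard : (H.neighborFinset v).card = 3 := hv3'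
    have hcard1 : (S.erase v).card = a - 1 := by rw [Finset.card_erase_of_mem hvS, ha]
    have ha4 : 4 ≤ a := by
      have := Finset.card_le_card hsub
      omega
    have hsplit : ∑ n ∈ S.erase v \ H.neighborFinset v, H.degree n
        + ∑ n ∈ H.neighborFinset v, H.degree n = ∑ n ∈ S.erase v, H.degree n :=
      Finset.sum_sdiff hsub
    have hdiffcard : (S.erase v \ H.neighborFinset v).card = a - 4 := by
      rw [Finset.card_sdiff_of_subset hsub, hNcard, hcard1]
      omega
    have hdiffle : ∑ n ∈ S.erase v \ H.neighborFinset v, H.degree n ≤ 3 * (a - 4) := by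
      calc ∑ n ∈ S.erase v \ H.neighborFinset v, H.degree n
          ≤ ∑ _n ∈ S.erase v \ H.neighborFinset v, 3 := by
            refine Finset.sum_le_sum (fun n hn => ?_)
            exact hdeg3 n ((Finset.sdiff_subset.trans (Finset.erase_subset v S)) hn)
        _ = 3 * (a - 4) := by rw [Finset.sum_const, smul_eq_mul, hdiffcard]; ring
    have herase : H.degree v + ∑ n ∈ S.erase v, H.degree n = ∑ n ∈ S, H.degree n :=
      Finset.add_sum_erase S (fun n => H.degree n) hvS
    omega
  refine ⟨?_, ?_, ?_, ?_⟩
  · -- b = 0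
    intro hb0
    subst hb0
    omega
  · -- b = 1
    intro hb1
    subst hb1
    by_contra hlt
    push_neg at hlt
    have ha9 : a = 9 := by omega
    -- the unique degree-2 vertex
    have hone : ∃ u ∈ S, H.degree u = 2 ∧ ∀ w ∈ S, w ≠ u → H.degree w = 3 := by
      have hfil := Finset.sum_filter_add_sum_filter_not S (fun v => H.degree v < 3)
        (fun v => 3 - H.degree v)
      have hzero : ∑ v ∈ S.filter (fun v => ¬ H.degree v < 3), (3 - H.degree v) = 0 := by
        refine Finset.sum_eq_zero (fun v hv => ?_)
        rw [Finset.mem_filter] at hv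
        omega
      have hLow : ∑ v ∈ S.filter (fun v => H.degree v < 3), (3 - H.degree v) = 1 := by
        omega
      have hne : (S.filter (fun v => H.degree v < 3)).Nonempty := by
        by_contra h
        rw [Finset.not_nonempty_iff_eq_empty] at h
        rw [h, Finset.sum_empty] at hLow
        omega
      obtain ⟨u, hu⟩ := hne
      have huS : u ∈ S := (Finset.mem_filter.mp hu).1
      have hkey := Finset.add_sum_erase (S.filter (fun v => H.degree v < 3))
        (fun v => 3 - H.degree v) hu
      beta_reduce at hkey
      have hpos : 1 ≤ 3 - H.degree u := by
        have := (Finset.mem_filter.mp hu).2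
        omega
      have hrest : ∑ v ∈ (S.filter (fun v => H.degree v < 3)).erase u, (3 - H.degree v) = 0 := by
        omega
      have hdu : H.degree u = 2 := by
        have h4 := hdeg3 u huS
        have h5 := (Finset.mem_filter.mp hu).2
        omega
      refine ⟨u, huS, hdu, fun w hwS hwu => ?_⟩
      by_contra hw3
      have hwlt : H.degree w < 3 := by
        have := hdeg3 w hwS
        omega
      have hwfil : w ∈ (S.filter (fun v => H.degree v < 3)).erase u :=
        Finset.mem_erase.mpr ⟨hwu, Finset.mem_filter.mpr ⟨hwS, hwlt⟩⟩
      have := Finset.sum_eq_zero_iff.mp hrest w hwfil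
      omega
    obtain ⟨u, huS, hdu, hrest3⟩ := hone
    -- far vertices
    set F := S \ insert u (H.neighborFinset u) with hFdef
    have hFcard : 6 ≤ F.card := by
      have h2 : (H.neighborFinset u).card = 2 := hdu
      have h1 := Finset.card_insert_le u (H.neighborFinset u)
      have h3 := Finset.le_card_sdiff (insert u (H.neighborFinset u)) S
      rw [← hFdef] at h3
      omega
    have hFmem : ∀ v ∈ F, v ∈ S ∧ v ≠ u ∧ ¬ H.Adj u v := by
      intro v hv
      rw [hFdef, Finset.mem_sdiff, Finset.mem_insert, mem_neighborFinset] at hv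
      push_neg at hv
      exact ⟨hv.1, hv.2.1, hv.2.2⟩
    have hFnbr : ∀ v ∈ F, ∃ n, H.Adj u n ∧ H.Adj n v := by
      intro v hv
      obtain ⟨hvS, hvu, hvadj⟩ := hFmem v hv
      have hdv : H.degree v = 3 := hrest3 v hvS hvu
      have hball := ball_lemma H S hsupp htri hC4 hdv
      have hsum9 : ∑ n ∈ H.neighborFinset v, H.degree n = 9 := by
        have hall : ∀ n ∈ H.neighborFinset v, H.degree n = 3 := by
          intro n hn
          rw [mem_neighborFinset] at hn
          refine hrest3 n (hsupp v n hn).2 (fun h => ?_)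
          exact hvadj (h ▸ hn).symm
        rw [Finset.sum_congr rfl hall, Finset.sum_const, smul_eq_mul]
        have hc : (H.neighborFinset v).card = 3 := hdv
        omega
      have hh := hball.2 u huS (by rw [hsum9, ha]; omega)
      rcases hh with h | h | h
      · exact absurd h.symm hvu
      · exact absurd h.symm hvadj
      · obtain ⟨n, hn1, hn2⟩ := h
        exact ⟨n, hn2.symm, hn1.symm⟩
    -- count: F is covered by neighbours of neighbours of u
    have hcover : F ⊆ (H.neighborFinset u).biUnion
        (fun n => (H.neighborFinset n).erase u) := by
      intro v hv
      obtain ⟨n, hn1, hn2⟩ := hFnbr v hv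
      rw [Finset.mem_biUnion]
      refine ⟨n, (mem_neighborFinset H u n).mpr hn1, ?_⟩
      rw [Finset.mem_erase, mem_neighborFinset]
      exact ⟨(hFmem v hv).2.1, hn2⟩
    have hcount : ((H.neighborFinset u).biUnion
        (fun n => (H.neighborFinset n).erase u)).card ≤ 4 := by
      refine le_trans (Finset.card_biUnion_le) ?_
      have hbound : ∀ n ∈ H.neighborFinset u, ((H.neighborFinset n).erase u).card ≤ 2 := by
        intro n hn
        rw [mem_neighborFinset] at hn
        have hu_mem : u ∈ H.neighborFinset n := (mem_neighborFinset H n u).mpr hn.symm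
        rw [Finset.card_erase_of_mem hu_mem]
        have := hdeg3 n (hsupp u n hn).2
        rw [← card_neighborFinset_eq_degree] at this
        omega
      calc ∑ n ∈ H.neighborFinset u, ((H.neighborFinset n).erase u).card
          ≤ ∑ _n ∈ H.neighborFinset u, 2 := Finset.sum_le_sum hbound
        _ = 4 := by
            rw [Finset.sum_const, smul_eq_mul]
            have hc : (H.neighborFinset u).card = 2 := hdu
            omega
    have := Finset.card_le_card hcover
    omega
  · -- b = 2
    intro hb2
    subst hb2
    by_contra hlt
    push_neg at hlt
    have ha8 : a = 8 := by omega
    set Low := S.filter (fun v => H.degree v < 3) with hLowdef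
    have hfil := Finset.sum_filter_add_sum_filter_not S (fun v => H.degree v < 3)
      (fun v => 3 - H.degree v)
    have hzero : ∑ v ∈ S.filter (fun v => ¬ H.degree v < 3), (3 - H.degree v) = 0 := by
      refine Finset.sum_eq_zero (fun v hv => ?_)
      rw [Finset.mem_filter] at hv
      omega
    rw [← hLowdef] at hfil
    have hLowsum : ∑ v ∈ Low, (3 - H.degree v) = 2 := by omega
    have hLowcard : Low.card ≤ 2 := by
      have h1 := Finset.card_nsmul_le_sum Low (fun v => 3 - H.degree v) 1 (fun v hv => by
        rw [hLowdef, Finset.mem_filter] at hv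
        beta_reduce
        omega)
      rw [smul_eq_mul] at h1
      omega
    have hLowdsum : ∑ v ∈ Low, H.degree v + 2 = 3 * Low.card := by
      have h1 : ∀ v ∈ Low, H.degree v + (3 - H.degree v) = 3 := by
        intro v hv
        rw [hLowdef, Finset.mem_filter] at hv
        have := hdeg3 v hv.1
        omega
      have h2 : ∑ v ∈ Low, (H.degree v + (3 - H.degree v)) = ∑ v ∈ Low, 3 :=
        Finset.sum_congr rfl h1
      rw [Finset.sum_add_distrib, Finset.sum_const, smul_eq_mul] at h2
      omega
    set Excl := Low.biUnion (fun u => insert u (H.neighborFinset u)) with hExcldef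
    have hExclcard : Excl.card ≤ 6 := by
      rw [hExcldef]
      refine le_trans (Finset.card_biUnion_le) ?_
      have hb1 : ∀ u ∈ Low, (insert u (H.neighborFinset u)).card ≤ 1 + H.degree u := by
        intro u _
        have h1 := Finset.card_insert_le u (H.neighborFinset u)
        rw [← card_neighborFinset_eq_degree]
        omega
      calc ∑ u ∈ Low, (insert u (H.neighborFinset u)).card
          ≤ ∑ u ∈ Low, (1 + H.degree u) := Finset.sum_le_sum hb1
        _ = Low.card + ∑ u ∈ Low, H.degree u := by
            rw [Finset.sum_add_distrib, Finset.sum_const, smul_eq_mul]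
            ring
        _ ≤ 6 := by omega
    have hex : ∃ v, v ∈ S \ Excl := by
      have h1 := Finset.le_card_sdiff Excl S
      have h0 : 0 < (S \ Excl).card := by omega
      obtain ⟨v, hv⟩ := Finset.card_pos.mp h0
      exact ⟨v, hv⟩
    obtain ⟨v, hv⟩ := hex
    rw [Finset.mem_sdiff] at hv
    obtain ⟨hvS, hvE⟩ := hv
    have hvnotLow : v ∉ Low := by
      intro h
      exact hvE (by rw [hExcldef]; exact Finset.mem_biUnion.mpr ⟨v, h, Finset.mem_insert_self _ _⟩)
    have hdv : H.degree v = 3 := by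
      rw [hLowdef, Finset.mem_filter] at hvnotLow
      have h1 := hdeg3 v hvS
      push_neg at hvnotLow
      have h2 := hvnotLow hvS
      omega
    have hnbr3 : ∀ n ∈ H.neighborFinset v, H.degree n = 3 := by
      intro n hn
      rw [mem_neighborFinset] at hn
      by_contra h
      have hnS : n ∈ S := (hsupp v n hn).2
      have hnLow : n ∈ Low := by
        rw [hLowdef, Finset.mem_filter]
        have := hdeg3 n hnS
        exact ⟨hnS, by omega⟩
      have : v ∈ Excl := by
        rw [hExcldef]
        exact Finset.mem_biUnion.mpr ⟨n, hnLow,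
          Finset.mem_insert.mpr (Or.inr ((mem_neighborFinset H n v).mpr hn.symm))⟩
      exact hvE this
    have hball := (ball_lemma H S hsupp htri hC4 hdv).1
    have hsum9 : ∑ n ∈ H.neighborFinset v, H.degree n = 9 := by
      rw [Finset.sum_congr rfl hnbr3, Finset.sum_const, smul_eq_mul]
      have hc : (H.neighborFinset v).card = 3 := hdv
      omega
    rw [hsum9, ha] at hball
    omega
  · -- b = 3
    intro hb3
    subst hb3
    omega


set_option maxHeartbeats 1600000 in
theorem stmt13 {V : Type*} [Fintype V] (G : SimpleGraph V) (L R : Set V)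
    (hdisj : Disjoint L R) (hcover : L ∪ R = Set.univ)
    (hbip : ∀ ⦃u v : V⦄, G.Adj u v → (u ∈ L ∧ v ∈ R) ∨ (u ∈ R ∧ v ∈ L))
    (hgirth : G.girth = 8)
    (hreg : ∀ v ∈ L, Nat.card (G.neighborSet v) = 3)
    (hcyc : ∀ (u v : V) (c₁ : G.Walk u u) (c₂ : G.Walk v v),
      c₁.IsCycle → c₂.IsCycle → c₁.length = 8 → c₂.length = 8 →
      {e : Sym2 V | e ∈ c₁.edges} ≠ {e : Sym2 V | e ∈ c₂.edges} →
      ∀ w ∈ L, w ∈ c₁.support → w ∉ c₂.support)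
    (S : Set V) (hSL : S ⊆ L) (hne : S.Nonempty)
    (a : ℕ) (haS : Nat.card S = a)
    (hcheck : ∀ r ∈ R, Nat.card {v : V | v ∈ S ∧ G.Adj r v} ≤ 2)
    (b : ℕ) (hb : b = Nat.card {r : V | r ∈ R ∧ Odd (Nat.card {v : V | v ∈ S ∧ G.Adj r v})})
    (hba : b < a) :
    (b = 0 → 10 ≤ a) ∧ (b = 1 → 11 ≤ a) ∧ (b = 2 → 10 ≤ a) ∧ (b = 3 → 7 ≤ a) := by
  classical
  -- basic separation facts
  have hLR : ∀ p q, p ∈ L → q ∈ R → p ≠ q := by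
    intro p q hp hq h
    exact Set.disjoint_left.mp hdisj hp (h ▸ hq)
  have hRL : ∀ {p r}, p ∈ L → G.Adj p r → r ∈ R := by
    intro p r hp hadj
    rcases hbip hadj with ⟨_, h2⟩ | ⟨h1, _⟩
    · exact h2
    · exact absurd hp (Set.disjoint_right.mp hdisj h1)
  -- a check has at most two neighbours in S
  have hS3 : ∀ r ∈ R, ∀ x y z : V, x ∈ S → y ∈ S → z ∈ S → x ≠ y → x ≠ z → y ≠ z →
      G.Adj r x → G.Adj r y → G.Adj r z → False := by
    intro r hr x y z hx hy hz hxy hxz hyz ax ay az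
    have h1 : ({x, y, z} : Set V) ⊆ {v | v ∈ S ∧ G.Adj r v} := by
      intro p hp
      rcases hp with rfl | rfl | rfl
      · exact ⟨hx, ax⟩
      · exact ⟨hy, ay⟩
      · exact ⟨hz, az⟩
    have h2 : ({x, y, z} : Set V).ncard = 3 := by
      rw [Set.ncard_eq_three]
      exact ⟨x, y, z, hxy, hxz, hyz, rfl⟩
    have h3 := hcheck r hr
    rw [Nat.card_coe_set_eq] at h3
    have h4 := Set.ncard_le_ncard h1 (Set.toFinite _)
    omega
  -- the reduced graph H on S
  let H : SimpleGraph V :=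
    { Adj := fun p q => p ≠ q ∧ p ∈ S ∧ q ∈ S ∧ ∃ r ∈ R, G.Adj r p ∧ G.Adj r q
      symm := by
        constructor
        rintro p q ⟨h1, h2, h3, r, hr, h4, h5⟩
        exact ⟨h1.symm, h3, h2, r, hr, h5, h4⟩
      loopless := by
        constructor
        rintro p ⟨h1, -⟩
        exact h1 rfl }
  letI : DecidableRel H.Adj := Classical.decRel _
  have hHadj : ∀ p q, H.Adj p q ↔
      (p ≠ q ∧ p ∈ S ∧ q ∈ S ∧ ∃ r ∈ R, G.Adj r p ∧ G.Adj r q) := fun p q => Iff.rfl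
  -- triangle-freeness of H
  have htri : ∀ x y z, H.Adj x y → H.Adj y z → H.Adj x z → False := by
    intro x y z hxy hyz hxz
    obtain ⟨hnxy, hxS, hyS, r1, hr1R, hr1x, hr1y⟩ := hxy
    obtain ⟨hnyz, -, hzS, r2, hr2R, hr2y, hr2z⟩ := hyz
    obtain ⟨hnxz, -, -, r3, hr3R, hr3x, hr3z⟩ := hxz
    have h12 : r1 ≠ r2 := by
      rintro rfl
      exact hS3 r1 hr1R x y z hxS hyS hzS hnxy hnxz hnyz hr1x hr1y hr2z
    have h13 : r1 ≠ r3 := by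
      rintro rfl
      exact hS3 r1 hr1R x y z hxS hyS hzS hnxy hnxz hnyz hr1x hr1y hr3z
    have h23 : r2 ≠ r3 := by
      rintro rfl
      exact hS3 r2 hr2R x y z hxS hyS hzS hnxy hnxz hnyz hr3x hr2y hr2z
    exact no6 hgirth hnxy hnxz hnyz h12 h13 h23
      (hLR z r1 (hSL hzS) hr1R) (hLR x r2 (hSL hxS) hr2R) (hLR y r3 (hSL hyS) hr3R)
      hr1x.symm hr1y hr2y.symm hr2z hr3z.symm hr3x
  -- no two distinct 4-cycle configurations through a common vertex
  have hC4 : ∀ v x y z t w w', H.Adj v x → H.Adj v y → H.Adj x w → H.Adj y w →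
      H.Adj v z → H.Adj v t → H.Adj z w' → H.Adj t w' →
      x ≠ y → z ≠ t → w ≠ v → w' ≠ v →
      w = w' ∧ ((x = z ∧ y = t) ∨ (x = t ∧ y = z)) := by
    intro v x y z t w w' hvx hvy hxw hyw hvz hvt hzw htw hxy hzt hwv hw'v
    obtain ⟨hne_vx, hvS, hxS, r1, hr1R, hr1v, hr1x⟩ := hvx
    obtain ⟨hne_vy, -, hyS, r4, hr4R, hr4v, hr4y⟩ := hvy
    obtain ⟨hne_xw, -, hwS, r2, hr2R, hr2x, hr2w⟩ := hxw
    obtain ⟨hne_yw, -, -, r3, hr3R, hr3y, hr3w⟩ := hyw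
    obtain ⟨hne_vz, -, hzS, s1, hs1R, hs1v, hs1z⟩ := hvz
    obtain ⟨hne_vt, -, htS, s4, hs4R, hs4v, hs4t⟩ := hvt
    obtain ⟨hne_zw', -, hw'S, s2, hs2R, hs2z, hs2w'⟩ := hzw
    obtain ⟨hne_tw', -, -, s3, hs3R, hs3t, hs3w'⟩ := htw
    have hvL := hSL hvS
    have hxL := hSL hxS
    have hyL := hSL hyS
    have hzL := hSL hzS
    have htL := hSL htS
    have hwL := hSL hwS
    have hw'L := hSL hw'S
    -- vertex distinctness
    have hne_vw : v ≠ w := hwv.symm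
    have hne_vw' : v ≠ w' := hw'v.symm
    have hne_wx : w ≠ x := hne_xw.symm
    have hne_wy : w ≠ y := hne_yw.symm
    have hne_w'z : w' ≠ z := hne_zw'.symm
    have hne_w't : w' ≠ t := hne_tw'.symm
    -- check distinctness for cycle 1
    have hd12 : r1 ≠ r2 := by
      rintro rfl
      exact hS3 r1 hr1R v x w hvS hxS hwS hne_vx hne_vw hne_xw hr1v hr1x hr2w
    have hd13 : r1 ≠ r3 := by
      rintro rfl
      exact hS3 r1 hr1R v x y hvS hxS hyS hne_vx hne_vy hxy hr1v hr1x hr3y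
    have hd14 : r1 ≠ r4 := by
      rintro rfl
      exact hS3 r1 hr1R v x y hvS hxS hyS hne_vx hne_vy hxy hr1v hr1x hr4y
    have hd23 : r2 ≠ r3 := by
      rintro rfl
      exact hS3 r2 hr2R x w y hxS hwS hyS hne_xw (hxy) hne_wy hr2x hr2w hr3y
    have hd24 : r2 ≠ r4 := by
      rintro rfl
      exact hS3 r2 hr2R x w v hxS hwS hvS hne_xw hne_vx.symm hwv hr2x hr2w hr4v
    have hd34 : r3 ≠ r4 := by
      rintro rfl
      exact hS3 r3 hr3R y w v hyS hwS hvS hne_yw hne_vy.symm hwv hr3y hr3w hr4v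
    -- check distinctness for cycle 2
    have he12 : s1 ≠ s2 := by
      rintro rfl
      exact hS3 s1 hs1R v z w' hvS hzS hw'S hne_vz hne_vw' hne_zw' hs1v hs1z hs2w'
    have he13 : s1 ≠ s3 := by
      rintro rfl
      exact hS3 s1 hs1R v z t hvS hzS htS hne_vz hne_vt hzt hs1v hs1z hs3t
    have he14 : s1 ≠ s4 := by
      rintro rfl
      exact hS3 s1 hs1R v z t hvS hzS htS hne_vz hne_vt hzt hs1v hs1z hs4t
    have he23 : s2 ≠ s3 := by
      rintro rfl
      exact hS3 s2 hs2R z w' t hzS hw'S htS hne_zw' hzt hne_w't hs2z hs2w' hs3t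
    have he24 : s2 ≠ s4 := by
      rintro rfl
      exact hS3 s2 hs2R z w' v hzS hw'S hvS hne_zw' hne_vz.symm hw'v hs2z hs2w' hs4v
    have he34 : s3 ≠ s4 := by
      rintro rfl
      exact hS3 s3 hs3R t w' v htS hw'S hvS hne_tw' hne_vt.symm hw'v hs3t hs3w' hs4v
    -- build the two 8-cycles
    obtain ⟨c1, hc1, hlen1, hedg1, hsup1⟩ := cyc8 G hr1v.symm hr1x hr2x.symm hr2w hr3w.symm hr3y
      hr4y.symm hr4v hne_vx hne_vw hne_vy hne_xw hxy hne_wy hd12 hd13 hd14 hd23 hd24 hd34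
      (hLR v r2 hvL hr2R) (hLR v r3 hvL hr3R) (hLR x r3 hxL hr3R) (hLR x r4 hxL hr4R)
      (hLR w r1 hwL hr1R) (hLR w r4 hwL hr4R) (hLR y r1 hyL hr1R) (hLR y r2 hyL hr2R)
    obtain ⟨c2, hc2, hlen2, hedg2, hsup2⟩ := cyc8 G hs1v.symm hs1z hs2z.symm hs2w' hs3w'.symm hs3t
      hs4t.symm hs4v hne_vz hne_vw' hne_vt hne_zw' hzt hne_w't he12 he13 he14 he23 he24 he34
      (hLR v s2 hvL hs2R) (hLR v s3 hvL hs3R) (hLR z s3 hzL hs3R) (hLR z s4 hzL hs4R)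
      (hLR w' s1 hw'L hs1R) (hLR w' s4 hw'L hs4R) (hLR t s1 htL hs1R) (hLR t s2 htL hs2R)
    by_cases hEq : {e : Sym2 V | e ∈ c1.edges} = {e : Sym2 V | e ∈ c2.edges}
    · -- equal edge sets: extract structure
      have htrans : ∀ e : Sym2 V, e ∈ c1.edges → e ∈ c2.edges := by
        intro e he
        have h1 : e ∈ {e : Sym2 V | e ∈ c1.edges} := he
        rw [hEq] at h1
        exact h1
      -- useful inequalities
      have hne_vs1 : v ≠ s1 := hLR v s1 hvL hs1R
      have hne_vs2 : v ≠ s2 := hLR v s2 hvL hs2R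
      have hne_vs3 : v ≠ s3 := hLR v s3 hvL hs3R
      have hne_vs4 : v ≠ s4 := hLR v s4 hvL hs4R
      have hne_ws1 : w ≠ s1 := hLR w s1 hwL hs1R
      have hne_ws2 : w ≠ s2 := hLR w s2 hwL hs2R
      have hne_ws3 : w ≠ s3 := hLR w s3 hwL hs3R
      have hne_ws4 : w ≠ s4 := hLR w s4 hwL hs4R
      have hne_r4v : r4 ≠ v := (hLR v r4 hvL hr4R).symm
      -- first: r1 ∈ {s1, s4}
      have hm1 : s(v, r1) ∈ c2.edges := htrans _ (by rw [hedg1]; simp)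
      rw [hedg2] at hm1
      simp only [List.mem_cons, List.not_mem_nil, or_false, Sym2.eq_iff] at hm1
      have hr1cases : r1 = s1 ∨ r1 = s4 := by
        rcases hm1 with (⟨-, h⟩ | ⟨h, -⟩) | (⟨h, -⟩ | ⟨h, -⟩) | (⟨h, -⟩ | ⟨h, -⟩) |
          (⟨h, -⟩ | ⟨h, -⟩) | (⟨h, -⟩ | ⟨h, -⟩) | (⟨h, -⟩ | ⟨h, -⟩) | (⟨h, -⟩ | ⟨h, -⟩) |
          (⟨h, -⟩ | ⟨-, h⟩)
        exacts [Or.inl h, absurd h hne_vs1, absurd h hne_vs1, absurd h hne_vz,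
          absurd h hne_vz, absurd h hne_vs2, absurd h hne_vs2, absurd h hne_vw',
          absurd h hne_vw', absurd h hne_vs3, absurd h hne_vs3, absurd h hne_vt,
          absurd h hne_vt, absurd h hne_vs4, absurd h hne_vs4, Or.inr h]
      -- second: r4 ∈ {s1, s4}
      have hm4 : s(r4, v) ∈ c2.edges := htrans _ (by rw [hedg1]; simp)
      rw [hedg2] at hm4
      simp only [List.mem_cons, List.not_mem_nil, or_false, Sym2.eq_iff] at hm4
      have hr4cases : r4 = s1 ∨ r4 = s4 := by
        rcases hm4 with (⟨-, h⟩ | ⟨h, -⟩) | (⟨-, h⟩ | ⟨-, h⟩) | (⟨-, h⟩ | ⟨-, h⟩) |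
          (⟨-, h⟩ | ⟨-, h⟩) | (⟨-, h⟩ | ⟨-, h⟩) | (⟨-, h⟩ | ⟨-, h⟩) | (⟨-, h⟩ | ⟨-, h⟩) |
          (⟨h, -⟩ | ⟨-, h⟩)
        exacts [absurd h hne_vs1, Or.inl h, absurd h hne_vz, absurd h hne_vs1,
          absurd h hne_vs2, absurd h hne_vz, absurd h hne_vw', absurd h hne_vs2,
          absurd h hne_vs3, absurd h hne_vw', absurd h hne_vt, absurd h hne_vs3,
          absurd h hne_vs4, absurd h hne_vt, Or.inr h, absurd h hne_vs4]
      -- derive the pairing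
      have hxz_or : x = z ∨ x = t := by
        rcases hr1cases with h | h
        · subst h
          left
          by_contra hne
          exact hS3 r1 hr1R v x z hvS hxS hzS hne_vx hne_vz hne hr1v hr1x hs1z
        · subst h
          right
          by_contra hne
          exact hS3 r1 hr1R v x t hvS hxS htS hne_vx hne_vt hne hr1v hr1x hs4t
      have hyz_or : y = z ∨ y = t := by
        rcases hr4cases with h | h
        · subst h
          left
          by_contra hne
          exact hS3 r4 hr4R v y z hvS hyS hzS hne_vy hne_vz hne hr4v hr4y hs1z
        · subst h
          right
          by_contra hne
          exact hS3 r4 hr4R v y t hvS hyS htS hne_vy hne_vt hne hr4v hr4y hs4t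
      have hpair : (x = z ∧ y = t) ∨ (x = t ∧ y = z) := by
        rcases hxz_or with h | h <;> rcases hyz_or with h' | h'
        · exact absurd (h.trans h'.symm) hxy
        · exact Or.inl ⟨h, h'⟩
        · exact Or.inr ⟨h, h'⟩
        · exact absurd (h.trans h'.symm) hxy
      refine ⟨?_, hpair⟩
      -- now w = w'
      have hm2 : s(r2, w) ∈ c2.edges := htrans _ (by rw [hedg1]; simp)
      rw [hedg2] at hm2
      simp only [List.mem_cons, List.not_mem_nil, or_false, Sym2.eq_iff] at hm2
      rcases hpair with ⟨hxz, hyt⟩ | ⟨hxt, hyz⟩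
      · subst hxz; subst hyt
        rcases hm2 with (⟨-, h⟩ | ⟨-, h⟩) | (⟨-, h⟩ | ⟨-, h⟩) | (⟨-, h⟩ | ⟨-, h⟩) |
          (⟨-, h⟩ | ⟨-, h⟩) | (⟨-, h⟩ | ⟨-, h⟩) | (⟨-, h⟩ | ⟨-, h⟩) | (⟨-, h⟩ | ⟨-, h⟩) |
          (⟨-, h⟩ | ⟨-, h⟩)
        exacts [absurd h hne_ws1, absurd h hwv, absurd h hne_wx, absurd h hne_ws1,
          absurd h hne_ws2, absurd h hne_wx, h, absurd h hne_ws2,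
          absurd h hne_ws3, h, absurd h hne_wy, absurd h hne_ws3,
          absurd h hne_ws4, absurd h hne_wy, absurd h hwv, absurd h hne_ws4]
      · subst hxt; subst hyz
        rcases hm2 with (⟨-, h⟩ | ⟨-, h⟩) | (⟨-, h⟩ | ⟨-, h⟩) | (⟨-, h⟩ | ⟨-, h⟩) |
          (⟨-, h⟩ | ⟨-, h⟩) | (⟨-, h⟩ | ⟨-, h⟩) | (⟨-, h⟩ | ⟨-, h⟩) | (⟨-, h⟩ | ⟨-, h⟩) |
          (⟨-, h⟩ | ⟨-, h⟩)
        exacts [absurd h hne_ws1, absurd h hwv, absurd h hne_wy, absurd h hne_ws1,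
          absurd h hne_ws2, absurd h hne_wy, h, absurd h hne_ws2,
          absurd h hne_ws3, h, absurd h hne_wx, absurd h hne_ws3,
          absurd h hne_ws4, absurd h hne_wx, absurd h hwv, absurd h hne_ws4]
    · -- distinct edge sets: contradiction with the hypothesis
      exfalso
      have hnot := hcyc v v c1 c2 hc1 hc2 hlen1 hlen2 hEq v hvL (by rw [hsup1]; simp)
      exact hnot (by rw [hsup2]; simp)
  -- Finset versions of the data
  set SF : Finset V := S.toFinset with hSFdef
  have hmemSF : ∀ v, v ∈ SF ↔ v ∈ S := fun v => Set.mem_toFinset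
  have haSF : SF.card = a := by
    rw [← haS, Nat.card_coe_set_eq, Set.ncard_eq_toFinset_card']
  have hsuppF : ∀ v w, H.Adj v w → v ∈ SF ∧ w ∈ SF := by
    intro v w hvw
    exact ⟨(hmemSF v).mpr hvw.2.1, (hmemSF w).mpr hvw.2.2.1⟩
  have hCv : ∀ v ∈ SF, (G.neighborFinset v).card = 3 := by
    intro v hv
    have h1 := hreg v (hSL ((hmemSF v).mp hv))
    rw [Nat.card_eq_fintype_card] at h1
    rw [neighborFinset_def, Set.toFinset_card]
    exact h1
  -- the "boundary" checks of each vertex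
  let Bf : V → Finset V := fun v => (G.neighborFinset v).filter
    (fun r => ¬ ∃ w, w ≠ v ∧ w ∈ S ∧ G.Adj r w)
  have hdegbij : ∀ v ∈ SF, (Bf v).card + H.degree v = 3 := by
    intro v hvF
    have hvS : v ∈ S := (hmemSF v).mp hvF
    have hvL : v ∈ L := hSL hvS
    have hD : ((G.neighborFinset v).filter
        (fun r => ∃ w, w ≠ v ∧ w ∈ S ∧ G.Adj r w)).card = H.degree v := by
      rw [← card_neighborFinset_eq_degree]
      have hspec : ∀ r ∈ (G.neighborFinset v).filter
          (fun r => ∃ w, w ≠ v ∧ w ∈ S ∧ G.Adj r w), ∃ w, w ≠ v ∧ w ∈ S ∧ G.Adj r w :=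
        fun r hr => (Finset.mem_filter.mp hr).2
      refine Finset.card_bij (fun r hr => Classical.choose (hspec r hr)) ?_ ?_ ?_
      · intro r hr
        obtain ⟨hwne, hwS, hadj⟩ := Classical.choose_spec (hspec r hr)
        have hrv : G.Adj v r := (mem_neighborFinset G v r).mp (Finset.mem_filter.mp hr).1
        have hrR : r ∈ R := hRL hvL hrv
        rw [mem_neighborFinset]
        exact ⟨hwne.symm, hvS, hwS, r, hrR, hrv.symm, hadj⟩
      · intro r1 hr1 r2 hr2 heq
        obtain ⟨hwne1, hwS1, hadj1⟩ := Classical.choose_spec (hspec r1 hr1)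
        obtain ⟨hwne2, hwS2, hadj2⟩ := Classical.choose_spec (hspec r2 hr2)
        have hrv1 : G.Adj v r1 := (mem_neighborFinset G v r1).mp (Finset.mem_filter.mp hr1).1
        have hrv2 : G.Adj v r2 := (mem_neighborFinset G v r2).mp (Finset.mem_filter.mp hr2).1
        beta_reduce at heq
        rw [← heq] at hadj2
        by_contra hne
        exact no4 hgirth hwne1.symm hne hrv1 hadj1 hadj2.symm hrv2.symm
      · intro w hw
        rw [mem_neighborFinset] at hw
        obtain ⟨hnevw, -, hwS, r, hrR, hrv, hrw⟩ := hw
        have hrmem : r ∈ (G.neighborFinset v).filter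
            (fun r => ∃ w, w ≠ v ∧ w ∈ S ∧ G.Adj r w) :=
          Finset.mem_filter.mpr ⟨(mem_neighborFinset G v r).mpr hrv.symm,
            ⟨w, hnevw.symm, hwS, hrw⟩⟩
        refine ⟨r, hrmem, ?_⟩
        obtain ⟨hw'ne, hw'S, hadj'⟩ := Classical.choose_spec (hspec r hrmem)
        by_contra hne
        exact hS3 r hrR v w (Classical.choose (hspec r hrmem)) hvS hwS hw'S hnevw
          (Ne.symm hw'ne) (fun h => hne h.symm) hrv hrw hadj'
    have hsplit := Finset.card_filter_add_card_filter_not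
      (s := G.neighborFinset v) (p := fun r => ∃ w, w ≠ v ∧ w ∈ S ∧ G.Adj r w)
    beta_reduce at hsplit
    rw [hCv v hvF] at hsplit
    have : (Bf v).card = ((G.neighborFinset v).filter
        (fun r => ¬ ∃ w, w ≠ v ∧ w ∈ S ∧ G.Adj r w)).card := rfl
    omega
  have hdeg3F : ∀ v ∈ SF, H.degree v ≤ 3 := by
    intro v hv
    have := hdegbij v hv
    omega
  -- the number of odd checks
  have hbig : b = ∑ v ∈ SF, (3 - H.degree v) := by
    have hb1 : b = ({r : V | r ∈ R ∧
        Odd (Nat.card {v : V | v ∈ S ∧ G.Adj r v})}.toFinset).card := by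
      rw [hb, Nat.card_coe_set_eq, Set.ncard_eq_toFinset_card']
    have hBF : {r : V | r ∈ R ∧ Odd (Nat.card {v : V | v ∈ S ∧ G.Adj r v})}.toFinset
        = SF.biUnion Bf := by
      ext r
      rw [Set.mem_toFinset, Set.mem_setOf_eq, Finset.mem_biUnion]
      constructor
      · rintro ⟨hrR, hodd⟩
        have hk := hcheck r hrR
        obtain ⟨m, hm⟩ := hodd
        have hk1 : Nat.card {v : V | v ∈ S ∧ G.Adj r v} = 1 := by omega
        rw [Nat.card_coe_set_eq, Set.ncard_eq_one] at hk1
        obtain ⟨v, hv⟩ := hk1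
        have hvin : v ∈ S ∧ G.Adj r v := by
          have : v ∈ {v0 : V | v0 ∈ S ∧ G.Adj r v0} := by rw [hv]; rfl
          exact this
        refine ⟨v, (hmemSF v).mpr hvin.1, Finset.mem_filter.mpr
          ⟨(mem_neighborFinset G v r).mpr hvin.2.symm, ?_⟩⟩
        rintro ⟨w, hwne, hwS, hadj⟩
        have hwmem : w ∈ {v0 : V | v0 ∈ S ∧ G.Adj r v0} := ⟨hwS, hadj⟩
        rw [hv] at hwmem
        exact hwne hwmem
      · rintro ⟨v, hvSF, hrB⟩
        obtain ⟨hrN, hnone⟩ := Finset.mem_filter.mp hrB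
        have hadj : G.Adj v r := (mem_neighborFinset G v r).mp hrN
        have hvS : v ∈ S := (hmemSF v).mp hvSF
        have hrR : r ∈ R := hRL (hSL hvS) hadj
        refine ⟨hrR, ?_⟩
        have hsingle : {v0 : V | v0 ∈ S ∧ G.Adj r v0} = {v} := by
          ext w
          simp only [Set.mem_setOf_eq, Set.mem_singleton_iff]
          constructor
          · rintro ⟨hwS, hadj'⟩
            by_contra hne
            exact hnone ⟨w, hne, hwS, hadj'⟩
          · rintro rfl
            exact ⟨hvS, hadj.symm⟩
        rw [Nat.card_coe_set_eq, hsingle, Set.ncard_singleton]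
        exact odd_one
    have hdisjB : ∀ v ∈ SF, ∀ v' ∈ SF, v ≠ v' → Disjoint (Bf v) (Bf v') := by
      intro v hv v' hv' hnevv
      rw [Finset.disjoint_left]
      intro r hr hr'
      obtain ⟨hrN, hnone⟩ := Finset.mem_filter.mp hr
      obtain ⟨hrN', -⟩ := Finset.mem_filter.mp hr'
      exact hnone ⟨v', hnevv.symm, (hmemSF v').mp hv',
        ((mem_neighborFinset G v' r).mp hrN').symm⟩
    rw [hb1, hBF, Finset.card_biUnion hdisjB]
    exact Finset.sum_congr rfl (fun v hv => by have := hdegbij v hv; omega)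
  exact abstractETS H SF hsuppF htri hC4 hdeg3F a b haSF hbig hba
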